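/- Zero curvature (Lax) formulation of the Z₂-Sine-Gordon equation. Let u₀, u₁ : ℝ×ℝ → ℝ be smooth and let λ be a nonzero complex number. Define the 2×2 blocks Q = −(1/2)·[[∂_x u₀, 0], [∂_x u₁, ∂_x u₀]], C = [[cos u₀, 0], [−u₁ sin u₀, cos u₀]], S = [[sin u₀, 0], [u₁ cos u₀, sin u₀]], and the 4×4 complex matrix functions M = [[−iλ·I₂, Q], [−Q, iλ·I₂]] and N = (i/(4λ)) · [[C, S], [S, −C]]. Then the zero curvature equation ∂_t M − ∂_x N + MN − NM = 0 holds at a point if and only if the Z₂-Sine-Gordon equations ∂_t∂_x u₀ = sin u₀ and ∂_t∂_x u₁ = u₁ cos u₀ hold at that point. -/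

import Mathlib

set_option maxHeartbeats 4000000


/-- The block `Q = −(1/2)·[[∂_x u₀, 0],[∂_x u₁, ∂_x u₀]]`. -/
noncomputable def Qblock (u₀ u₁ : ℝ → ℝ → ℝ) (x t : ℝ) : Matrix (Fin 2) (Fin 2) ℂ :=
  -((1 : ℂ) / 2) •
    !![((deriv (fun x' => u₀ x' t) x : ℝ) : ℂ), 0;
       ((deriv (fun x' => u₁ x' t) x : ℝ) : ℂ), ((deriv (fun x' => u₀ x' t) x : ℝ) : ℂ)]

/-- The block `C = [[cos u₀, 0],[−u₁ sin u₀, cos u₀]]`. -/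
noncomputable def Cblock (u₀ u₁ : ℝ → ℝ → ℝ) (x t : ℝ) : Matrix (Fin 2) (Fin 2) ℂ :=
  !![((Real.cos (u₀ x t) : ℝ) : ℂ), 0;
     ((-(u₁ x t * Real.sin (u₀ x t)) : ℝ) : ℂ), ((Real.cos (u₀ x t) : ℝ) : ℂ)]

/-- The block `S = [[sin u₀, 0],[u₁ cos u₀, sin u₀]]`. -/
noncomputable def Sblock (u₀ u₁ : ℝ → ℝ → ℝ) (x t : ℝ) : Matrix (Fin 2) (Fin 2) ℂ :=
  !![((Real.sin (u₀ x t) : ℝ) : ℂ), 0;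
     ((u₁ x t * Real.cos (u₀ x t) : ℝ) : ℂ), ((Real.sin (u₀ x t) : ℝ) : ℂ)]

lemma aux_hasDerivAt_x (u : ℝ → ℝ → ℝ)
    (h : ContDiff ℝ (⊤ : ℕ∞) fun p : ℝ × ℝ => u p.1 p.2) (x t : ℝ) :
    HasDerivAt (fun x' => u x' t) (deriv (fun x' => u x' t) x) x := by
  have : DifferentiableAt ℝ (fun x' => u x' t) x :=
    ((h.differentiable (by simp)) (x, t)).comp (f := fun x' : ℝ => ((x', t) : ℝ × ℝ)) x
      (differentiableAt_id.prodMk (differentiableAt_const t))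
  exact this.hasDerivAt

lemma aux_hasDerivAt_partial (u : ℝ → ℝ → ℝ)
    (h : ContDiff ℝ (⊤ : ℕ∞) fun p : ℝ × ℝ => u p.1 p.2) (x t : ℝ) :
    HasDerivAt (fun t' => deriv (fun x' => u x' t') x)
      (deriv (fun t' => deriv (fun x' => u x' t') x) t) t := by
  set F : ℝ × ℝ → ℝ := fun p => u p.1 p.2 with hF
  have hG : ContDiff ℝ (⊤ : ℕ∞) (fun p : ℝ × ℝ => fderiv ℝ F p ((1:ℝ), (0:ℝ))) :=
    (h.fderiv_right (by simp)).clm_apply contDiff_const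
  have key : ∀ x' t', deriv (fun x'' => u x'' t') x' = fderiv ℝ F (x', t') ((1:ℝ), (0:ℝ)) := by
    intro x' t'
    have hFd : HasFDerivAt F (fderiv ℝ F (x', t')) (x', t') :=
      (h.differentiable (by simp) (x', t')).hasFDerivAt
    have hline : HasDerivAt (fun x'' : ℝ => ((x'', t') : ℝ × ℝ)) ((1:ℝ), (0:ℝ)) x' :=
      (hasDerivAt_id x').prodMk (hasDerivAt_const x' t')
    exact (hFd.comp_hasDerivAt x' hline).deriv
  have heq : (fun t' => deriv (fun x' => u x' t') x)
      = fun t' => fderiv ℝ F (x, t') ((1:ℝ), (0:ℝ)) := funext fun t' => key x t'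
  have hdiff : DifferentiableAt ℝ (fun t' => fderiv ℝ F (x, t') ((1:ℝ), (0:ℝ))) t := by
    have : DifferentiableAt ℝ (fun p : ℝ × ℝ => fderiv ℝ F p ((1:ℝ),(0:ℝ))) (x, t) :=
      (hG.differentiable (by simp)) (x, t)
    exact this.comp t ((differentiableAt_const x).prodMk differentiableAt_id)
  exact (heq ▸ hdiff).hasDerivAt.congr_deriv (by rw [heq])

/-- zero curvature (Lax) formulation of the `Z₂`-Sine-Gordon equation.
With the 4×4 matrices `M = [[−iλ·I₂, Q],[−Q, iλ·I₂]]` and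
`N = (i/(4λ))·[[C, S],[S, −C]]`, the zero curvature equation
`∂_t M − ∂_x N + MN − NM = 0` at a point is equivalent to the `Z₂`-Sine-Gordon
equations `∂_t∂_x u₀ = sin u₀` and `∂_t∂_x u₁ = u₁ cos u₀` there. -/
theorem Z2_sineGordon_zero_curvature (u₀ u₁ : ℝ → ℝ → ℝ)
    (h₀ : ContDiff ℝ (⊤ : ℕ∞) fun p : ℝ × ℝ => u₀ p.1 p.2)
    (h₁ : ContDiff ℝ (⊤ : ℕ∞) fun p : ℝ × ℝ => u₁ p.1 p.2)
    (lam : ℂ) (hlam : lam ≠ 0)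
    (M N : ℝ → ℝ → Matrix (Fin 2 ⊕ Fin 2) (Fin 2 ⊕ Fin 2) ℂ)
    (hM : ∀ x t, M x t = Matrix.fromBlocks
        ((-(Complex.I * lam)) • (1 : Matrix (Fin 2) (Fin 2) ℂ)) (Qblock u₀ u₁ x t)
        (-(Qblock u₀ u₁ x t)) ((Complex.I * lam) • (1 : Matrix (Fin 2) (Fin 2) ℂ)))
    (hN : ∀ x t, N x t = (Complex.I / (4 * lam)) • Matrix.fromBlocks
        (Cblock u₀ u₁ x t) (Sblock u₀ u₁ x t)
        (Sblock u₀ u₁ x t) (-(Cblock u₀ u₁ x t)))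
    (x t : ℝ) :
    ((Matrix.of fun i j => deriv (fun t' => M x t' i j) t)
        - (Matrix.of fun i j => deriv (fun x' => N x' t i j) x)
        + M x t * N x t - N x t * M x t = 0)
      ↔ (deriv (fun t' => deriv (fun x' => u₀ x' t') x) t = Real.sin (u₀ x t)
          ∧ deriv (fun t' => deriv (fun x' => u₁ x' t') x) t
              = u₁ x t * Real.cos (u₀ x t)) := by

  have hu₀ := aux_hasDerivAt_x u₀ h₀ x t
  have hu₁ := aux_hasDerivAt_x u₁ h₁ x t
  have hpt := aux_hasDerivAt_partial u₀ h₀ x t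
  have hqt := aux_hasDerivAt_partial u₁ h₁ x t
  have hcos : HasDerivAt (fun x' => Real.cos (u₀ x' t)) (-Real.sin (u₀ x t) * (deriv (fun x' => u₀ x' t) x)) x :=
    hu₀.cos
  have hsin : HasDerivAt (fun x' => Real.sin (u₀ x' t)) (Real.cos (u₀ x t) * (deriv (fun x' => u₀ x' t) x)) x :=
    hu₀.sin
  have hm1 : HasDerivAt (fun x' => -(u₁ x' t * Real.sin (u₀ x' t)))
      (-((deriv (fun x' => u₁ x' t) x) * Real.sin (u₀ x t) + u₁ x t * (Real.cos (u₀ x t) * (deriv (fun x' => u₀ x' t) x)))) x := (hu₁.mul hsin).neg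
  have hm2 : HasDerivAt (fun x' => u₁ x' t * Real.cos (u₀ x' t))
      ((deriv (fun x' => u₁ x' t) x) * Real.cos (u₀ x t) + u₁ x t * (-Real.sin (u₀ x t) * (deriv (fun x' => u₀ x' t) x))) x := hu₁.mul hcos
  have hMt : (Matrix.of fun i j => deriv (fun t' => M x t' i j) t)
      = Matrix.fromBlocks
          (0 : Matrix (Fin 2) (Fin 2) ℂ)
          (-((1:ℂ)/2) • !![((deriv (fun t' => deriv (fun x' => u₀ x' t') x) t : ℝ) : ℂ), 0; ((deriv (fun t' => deriv (fun x' => u₁ x' t') x) t : ℝ) : ℂ), ((deriv (fun t' => deriv (fun x' => u₀ x' t') x) t : ℝ) : ℂ)])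
          (((1:ℂ)/2) • !![((deriv (fun t' => deriv (fun x' => u₀ x' t') x) t : ℝ) : ℂ), 0; ((deriv (fun t' => deriv (fun x' => u₁ x' t') x) t : ℝ) : ℂ), ((deriv (fun t' => deriv (fun x' => u₀ x' t') x) t : ℝ) : ℂ)])
          (0 : Matrix (Fin 2) (Fin 2) ℂ) := by
    ext i j
    fin_cases i <;> fin_cases j <;>
      simp only [hM, Matrix.of_apply, Matrix.fromBlocks_apply₁₁, Matrix.fromBlocks_apply₁₂,
        Matrix.fromBlocks_apply₂₁, Matrix.fromBlocks_apply₂₂, Qblock,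
        Matrix.smul_apply, Matrix.neg_apply, smul_eq_mul,
        Matrix.cons_val', Matrix.cons_val_zero, Matrix.cons_val_one, Matrix.head_cons,
        Matrix.empty_val', Matrix.cons_val_fin_one, Matrix.head_fin_const,
        Fin.isValue, mul_zero, neg_zero, neg_neg, neg_mul, Matrix.zero_apply] <;>
      first
        | (simp; done)
        | exact (hpt.ofReal_comp.const_mul (-((1:ℂ)/2))).deriv
        | exact (hqt.ofReal_comp.const_mul (-((1:ℂ)/2))).deriv
        | exact ((hpt.ofReal_comp.const_mul (-((1:ℂ)/2))).neg).deriv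
        | exact ((hqt.ofReal_comp.const_mul (-((1:ℂ)/2))).neg).deriv
        | exact ((hpt.ofReal_comp.const_mul ((1:ℂ)/2))).deriv
        | exact ((hqt.ofReal_comp.const_mul ((1:ℂ)/2))).deriv
        | exact hpt.ofReal_comp.deriv
        | exact hqt.ofReal_comp.deriv
        | (have h' := ((hpt.ofReal_comp.const_mul (-((1:ℂ)/2))).neg).deriv
           simpa [neg_mul, neg_neg] using h')
        | (have h' := ((hqt.ofReal_comp.const_mul (-((1:ℂ)/2))).neg).deriv
           simpa [neg_mul, neg_neg] using h')
  have hNx : (Matrix.of fun i j => deriv (fun x' => N x' t i j) x)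
      = (Complex.I / (4 * lam)) • Matrix.fromBlocks
          (!![((-Real.sin (u₀ x t) * (deriv (fun x' => u₀ x' t) x) : ℝ) : ℂ), 0;
              ((-((deriv (fun x' => u₁ x' t) x) * Real.sin (u₀ x t) + u₁ x t * (Real.cos (u₀ x t) * (deriv (fun x' => u₀ x' t) x))) : ℝ) : ℂ), ((-Real.sin (u₀ x t) * (deriv (fun x' => u₀ x' t) x) : ℝ) : ℂ)])
          (!![((Real.cos (u₀ x t) * (deriv (fun x' => u₀ x' t) x) : ℝ) : ℂ), 0;
              (((deriv (fun x' => u₁ x' t) x) * Real.cos (u₀ x t) + u₁ x t * (-Real.sin (u₀ x t) * (deriv (fun x' => u₀ x' t) x)) : ℝ) : ℂ), ((Real.cos (u₀ x t) * (deriv (fun x' => u₀ x' t) x) : ℝ) : ℂ)])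
          (!![((Real.cos (u₀ x t) * (deriv (fun x' => u₀ x' t) x) : ℝ) : ℂ), 0;
              (((deriv (fun x' => u₁ x' t) x) * Real.cos (u₀ x t) + u₁ x t * (-Real.sin (u₀ x t) * (deriv (fun x' => u₀ x' t) x)) : ℝ) : ℂ), ((Real.cos (u₀ x t) * (deriv (fun x' => u₀ x' t) x) : ℝ) : ℂ)])
          (-!![((-Real.sin (u₀ x t) * (deriv (fun x' => u₀ x' t) x) : ℝ) : ℂ), 0;
              ((-((deriv (fun x' => u₁ x' t) x) * Real.sin (u₀ x t) + u₁ x t * (Real.cos (u₀ x t) * (deriv (fun x' => u₀ x' t) x))) : ℝ) : ℂ), ((-Real.sin (u₀ x t) * (deriv (fun x' => u₀ x' t) x) : ℝ) : ℂ)]) := by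
    ext i j
    fin_cases i <;> fin_cases j <;>
      simp only [hN, Matrix.of_apply, Matrix.smul_apply, Matrix.fromBlocks_apply₁₁,
        Matrix.fromBlocks_apply₁₂, Matrix.fromBlocks_apply₂₁, Matrix.fromBlocks_apply₂₂,
        Cblock, Sblock, Matrix.neg_apply, smul_eq_mul,
        Matrix.cons_val', Matrix.cons_val_zero, Matrix.cons_val_one, Matrix.head_cons,
        Matrix.empty_val', Matrix.cons_val_fin_one, Matrix.head_fin_const, Fin.isValue,
        mul_zero, neg_zero, deriv_const] <;>
      first
        | (simp; done)
        | exact (hcos.ofReal_comp.const_mul (Complex.I / (4 * lam))).deriv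
        | exact (hsin.ofReal_comp.const_mul (Complex.I / (4 * lam))).deriv
        | exact (hm1.ofReal_comp.const_mul (Complex.I / (4 * lam))).deriv
        | exact (hm2.ofReal_comp.const_mul (Complex.I / (4 * lam))).deriv
        | exact ((hcos.ofReal_comp.neg).const_mul (Complex.I / (4 * lam))).deriv
        | exact ((hsin.ofReal_comp.neg).const_mul (Complex.I / (4 * lam))).deriv
        | exact ((hm1.ofReal_comp.neg).const_mul (Complex.I / (4 * lam))).deriv
        | exact ((hm2.ofReal_comp.neg).const_mul (Complex.I / (4 * lam))).deriv
        | (have h' := ((hcos.ofReal_comp.neg).const_mul (Complex.I / (4 * lam))).deriv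
           simpa using h')
        | (have h' := ((hm1.ofReal_comp.neg).const_mul (Complex.I / (4 * lam))).deriv
           simpa using h')
  have hl3 : lam ^ 3 * lam⁻¹ ^ 3 = 1 := by
    rw [← mul_pow, mul_inv_cancel₀ hlam, one_pow]
  have hl3' : ∀ z : ℂ, z * lam ^ 3 * lam⁻¹ ^ 3 = z := fun z => by
    rw [mul_assoc, hl3, mul_one]
  have hmain : (Matrix.of fun i j => deriv (fun t' => M x t' i j) t)
        - (Matrix.of fun i j => deriv (fun x' => N x' t i j) x)
        + M x t * N x t - N x t * M x t
      = Matrix.fromBlocks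
          (0 : Matrix (Fin 2) (Fin 2) ℂ)
          (!![-((1:ℂ)/2) * (((deriv (fun t' => deriv (fun x' => u₀ x' t') x) t : ℝ) : ℂ) - ((Real.sin (u₀ x t) : ℝ) : ℂ)), 0;
              -((1:ℂ)/2) * (((deriv (fun t' => deriv (fun x' => u₁ x' t') x) t : ℝ) : ℂ) - ((u₁ x t * Real.cos (u₀ x t) : ℝ) : ℂ)),
              -((1:ℂ)/2) * (((deriv (fun t' => deriv (fun x' => u₀ x' t') x) t : ℝ) : ℂ) - ((Real.sin (u₀ x t) : ℝ) : ℂ))])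
          (!![((1:ℂ)/2) * (((deriv (fun t' => deriv (fun x' => u₀ x' t') x) t : ℝ) : ℂ) - ((Real.sin (u₀ x t) : ℝ) : ℂ)), 0;
              ((1:ℂ)/2) * (((deriv (fun t' => deriv (fun x' => u₁ x' t') x) t : ℝ) : ℂ) - ((u₁ x t * Real.cos (u₀ x t) : ℝ) : ℂ)),
              ((1:ℂ)/2) * (((deriv (fun t' => deriv (fun x' => u₀ x' t') x) t : ℝ) : ℂ) - ((Real.sin (u₀ x t) : ℝ) : ℂ))])
          (0 : Matrix (Fin 2) (Fin 2) ℂ) := by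
    rw [hMt, hNx, hM x t, hN x t]
    rw [Matrix.mul_smul, Matrix.smul_mul, Matrix.fromBlocks_multiply, Matrix.fromBlocks_multiply]
    simp only [Matrix.fromBlocks_smul, sub_eq_add_neg, Matrix.fromBlocks_neg,
      Matrix.fromBlocks_add]
    rw [Matrix.fromBlocks_inj]
    refine ⟨?_, ?_, ?_, ?_⟩ <;>
      · ext i j
        fin_cases i <;> fin_cases j <;>
          simp only [Fin.zero_eta, Fin.mk_one, Qblock, Cblock, Sblock,
            Matrix.mul_apply, Matrix.of_apply, Fin.sum_univ_two, eq_self_iff_true, if_true, if_false,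
            one_ne_zero, zero_ne_one, mul_one, one_mul,
            Matrix.add_apply, Matrix.neg_apply, Matrix.smul_apply, smul_eq_mul,
            Matrix.cons_val', Matrix.cons_val_zero, Matrix.cons_val_one, Matrix.head_cons,
            Matrix.empty_val', Matrix.cons_val_fin_one, Matrix.head_fin_const, Fin.isValue,
            Matrix.one_apply_eq, Matrix.zero_apply, Complex.ofReal_neg, Complex.ofReal_mul,
            Complex.ofReal_add, mul_zero, zero_mul, add_zero, zero_add, neg_zero,
            Matrix.one_apply] <;>
          first
            | (simp; done)
            | ring1
            | (field_simp [hlam]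
               ring1)
            | (ring_nf
               rw [Complex.I_sq]
               field_simp [hlam])
            | (ring_nf
               rw [Complex.I_sq]
               field_simp [hlam]
               ring1)
  rw [hmain]
  constructor
  · intro h
    have h1 := congrFun (congrFun h (Sum.inl 0)) (Sum.inr 0)
    have h2 := congrFun (congrFun h (Sum.inl 1)) (Sum.inr 0)
    simp only [Matrix.fromBlocks_apply₁₂, Matrix.zero_apply, Matrix.cons_val_zero,
      Matrix.cons_val_one, Matrix.head_cons, Matrix.cons_val', Matrix.empty_val',
      Matrix.cons_val_fin_one, Fin.isValue] at h1 h2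
    have hne : (-((1:ℂ)/2)) ≠ 0 := by norm_num
    constructor
    · have h1' := sub_eq_zero.mp ((mul_eq_zero.mp h1).resolve_left hne)
      exact_mod_cast h1'
    · have h2' := sub_eq_zero.mp ((mul_eq_zero.mp h2).resolve_left hne)
      exact_mod_cast h2'
  · rintro ⟨e1, e2⟩
    ext i j
    fin_cases i <;> fin_cases j <;>
      simp [e1, e2, Matrix.fromBlocks_apply₁₁, Matrix.fromBlocks_apply₁₂,
        Matrix.fromBlocks_apply₂₁, Matrix.fromBlocks_apply₂₂]
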